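/- In a null foliation adapted chart, with l = M (components M^r = g^{r3}g^{34} − g^{33}g^{r4}), α = −(g³³)^{−1/2}dx³, and N the vector field with components N^r = g^{r3}g^{44} − g^{34}g^{r4}: ∇_μ N^μ = 0 if and only if dM♭(M, α♯) = 0. (When g⁴⁴ ≠ 0 one has N = (g⁴⁴/g³⁴) M and ∇_μN^μ = 0 ⟺ M(g⁴⁴/g³⁴) = 0; when g⁴⁴ = 0, N = 0 and both sides hold.) -/

import Mathlib

noncomputable section

namespace FFE

/-- Points of the chart domain `U_p ⊆ M` of a spacetime, in coordinates
`(x¹,…,x⁴)` (indexed here by `0,…,3`, so `x³ ↦ 2` and `x⁴ ↦ 3`). -/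
abbrev Pt : Type := Fin 4 → ℝ

/-- Scalar fields. -/
abbrev Sc : Type := Pt → ℝ

/-- Vector fields, given by their chart components. -/
abbrev Vec : Type := Fin 4 → Sc

/-- Covector fields (1-forms), given by their chart components. -/
abbrev Cov : Type := Fin 4 → Sc

/-- 2-forms, given by their (antisymmetric) chart components. -/
abbrev Form2 : Type := Fin 4 → Fin 4 → Sc

/-- Partial derivative along the `i`-th coordinate. -/
def pd (i : Fin 4) (f : Sc) : Sc := fun p => fderiv ℝ f p (Pi.single i 1)

/-- Smoothness of a scalar field. -/
def Smooth (f : Sc) : Prop := ContDiff ℝ (⊤ : ℕ∞) f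

/-- Directional derivative of a scalar field along a vector field. -/
def act (v : Vec) (f : Sc) : Sc := ∑ i, v i * pd i f

/-- Lie bracket of vector fields. -/
def bracket (v w : Vec) : Vec := fun μ => act v (w μ) - act w (v μ)

/-- Exterior derivative of a 1-form, evaluated on two vector fields:
`dω(v,w) = (∂_μ ω_ν − ∂_ν ω_μ) v^μ w^ν`. -/
def dOne (ω : Cov) (v w : Vec) : Sc :=
  ∑ μ, ∑ ν, (pd μ (ω ν) - pd ν (ω μ)) * v μ * w ν

/-- `log |f|`. -/
def logabs (f : Sc) : Sc := fun p => Real.log |f p|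

/-- A (smooth) Lorentzian metric of signature `(-1,1,1,1)`, given in a chart by its
covariant components `gdown`, contravariant components `ginv`, and volume factor
`vol = √(−det g)`. -/
structure Lorentzian where
  gdown : Fin 4 → Fin 4 → Sc
  ginv : Fin 4 → Fin 4 → Sc
  vol : Sc
  smooth_gdown : ∀ μ ν, Smooth (gdown μ ν)
  smooth_ginv : ∀ μ ν, Smooth (ginv μ ν)
  smooth_vol : Smooth vol
  symm_gdown : ∀ μ ν, gdown μ ν = gdown ν μ
  symm_ginv : ∀ μ ν, ginv μ ν = ginv ν μ
  inv_gdown : ∀ μ ν p, (∑ ρ, ginv μ ρ p * gdown ρ ν p) = if μ = ν then 1 else 0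
  vol_pos : ∀ p, 0 < vol p
  vol_sq : ∀ p, vol p ^ 2 = -Matrix.det (Matrix.of fun μ ν => gdown μ ν p)
  signature : ∀ p, ∃ e : Fin 4 → Fin 4 → ℝ, ∀ i j,
    (∑ μ, ∑ ν, gdown μ ν p * e i μ * e j ν) =
      if i = j then (if i = 0 then -1 else 1) else 0

namespace Lorentzian

variable (g : Lorentzian)

/-- Lowering an index: `v ↦ v♭`. -/
def flat (v : Vec) : Cov := fun μ => ∑ ν, g.gdown μ ν * v ν

/-- Raising an index: `ω ↦ ω♯`. -/
def sharp (ω : Cov) : Vec := fun μ => ∑ ν, g.ginv μ ν * ω ν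

/-- Metric pairing `g(v,w)` of vector fields. -/
def inner (v w : Vec) : Sc := ∑ μ, ∑ ν, g.gdown μ ν * v μ * w ν

/-- Christoffel symbols of the Levi-Civita connection. -/
def christoffel (μ ν ρ : Fin 4) : Sc := fun p =>
  (1 / 2) * ∑ σ, g.ginv μ σ p *
    (pd ν (g.gdown σ ρ) p + pd ρ (g.gdown σ ν) p - pd σ (g.gdown ν ρ) p)

/-- Covariant derivative `∇_v w` of the Levi-Civita connection. -/
def nabla (v w : Vec) : Vec := fun μ =>
  (∑ ν, v ν * pd ν (w μ)) + ∑ ν, ∑ ρ, g.christoffel μ ν ρ * v ν * w ρ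

/-- Divergence `∇_μ X^μ = (1/√(−g)) ∂_μ (√(−g) X^μ)`. -/
def div (v : Vec) : Sc := fun p =>
  (g.vol p)⁻¹ * ∑ μ, pd μ (fun q => g.vol q * v μ q) p

/-- Raising both indices of a 2-form. -/
def up2 (F : Form2) : Form2 := fun μ ν => ∑ ρ, ∑ σ, g.ginv μ ρ * g.ginv ν σ * F ρ σ

/-- The full contraction `F_{μν} F^{μν}`. -/
def contract2 (F : Form2) : Sc := ∑ μ, ∑ ν, F μ ν * g.up2 F μ ν

/-- The current density vector `j = *(d*F)`, in components
`j^μ = (1/√(−g)) ∂_ν (√(−g) F^{μν})`. -/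
def current (F : Form2) : Vec := fun μ => fun p =>
  (g.vol p)⁻¹ * ∑ ν, pd ν (fun q => g.vol q * g.up2 F μ ν q) p

/-- `F` is a null 2-form: `F_{μν}F^{μν} = 0`. -/
def IsNull (F : Form2) : Prop := g.contract2 F = 0

/-- The force-free condition `i_{j♯} F = 0` for the current `j` of `F`. -/
def ForceFree (F : Form2) : Prop := ∀ ν, (∑ μ, F μ ν * g.current F μ) = 0

end Lorentzian

/-- `dF = 0` for a 2-form. -/
def Closed (F : Form2) : Prop :=
  ∀ μ ν ρ, pd μ (F ν ρ) + pd ν (F ρ μ) + pd ρ (F μ ν) = 0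

/-- The Levi-Civita alternating symbol. -/
def eps (μ ν ρ σ : Fin 4) : ℝ :=
  Matrix.det (Matrix.of fun i j => if (![μ, ν, ρ, σ] i) = j then (1 : ℝ) else 0)

/-- Hodge star of a 2-form: `(*F)_{μν} = ½ √(−g) ε_{μνρσ} F^{ρσ}`. -/
def Lorentzian.hodge2 (g : Lorentzian) (F : Form2) : Form2 := fun μ ν => fun p =>
  (1 / 2) * g.vol p * ∑ ρ, ∑ σ, eps μ ν ρ σ * g.up2 F ρ σ p

/-- Exterior derivative of a 2-form (components of the 3-form `dG`). -/
def dTwo (G : Form2) : Fin 4 → Fin 4 → Fin 4 → Sc := fun μ ν ρ =>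
  pd μ (G ν ρ) + pd ν (G ρ μ) + pd ρ (G μ ν)

/-- The (scalar density representing the) wedge product of a 3-form with a 1-form. -/
def wedge31 (J : Fin 4 → Fin 4 → Fin 4 → Sc) (ω : Cov) : Sc := fun p =>
  ∑ μ, ∑ ν, ∑ ρ, ∑ σ, eps μ ν ρ σ * J μ ν ρ p * ω σ p

/-- The chart is adapted to a *null* foliation: on the leaves (the level sets of
`(x³,x⁴)`) the metric is degenerate, i.e. `g³³g⁴⁴ − (g³⁴)² = 0`. -/
def Lorentzian.NullAdapted (g : Lorentzian) : Prop :=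
  ∀ p, g.ginv 2 2 p * g.ginv 3 3 p - (g.ginv 2 3 p) ^ 2 = 0

/-- `M^r = g^{r3} g^{34} − g^{33} g^{r4}` (coordinates `x³,x⁴` are indices `2,3`). -/
def Mvec (g : Lorentzian) : Vec := fun r =>
  g.ginv r 2 * g.ginv 2 3 - g.ginv 2 2 * g.ginv r 3

/-- `N^r = g^{r3} g^{44} − g^{34} g^{r4}`. -/
def Nvec (g : Lorentzian) : Vec := fun r =>
  g.ginv r 2 * g.ginv 3 3 - g.ginv 2 3 * g.ginv r 3

/-- A null foliation adapted frame `(s, l, α♯, n)`: `l, n` null, `s, α♯` unit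
spacelike, `g(n,l) = −1`, all other frame inner products zero, spanning `TM`. -/
structure Frame (g : Lorentzian) (s l a n : Vec) : Prop where
  smooth_s : ∀ μ, Smooth (s μ)
  smooth_l : ∀ μ, Smooth (l μ)
  smooth_a : ∀ μ, Smooth (a μ)
  smooth_n : ∀ μ, Smooth (n μ)
  l_null : g.inner l l = 0
  n_null : g.inner n n = 0
  s_unit : g.inner s s = 1
  a_unit : g.inner a a = 1
  n_l : g.inner n l = -1
  n_s : g.inner n s = 0
  n_a : g.inner n a = 0
  l_s : g.inner l s = 0
  l_a : g.inner l a = 0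
  s_a : g.inner s a = 0
  spans : ∀ (p : Pt) (v : Fin 4 → ℝ), ∃ c : Fin 4 → ℝ,
    ∀ μ, v μ = c 0 * s μ p + c 1 * l μ p + c 2 * a μ p + c 3 * n μ p

/-- `l` is a pregeodesic vector field: `∇_l l` is everywhere proportional to `l`. -/
def Pregeodesic (g : Lorentzian) (l : Vec) : Prop :=
  ∃ f : Sc, g.nabla l l = fun μ => f * l μ

/-- The null expansion scalar `θ = ½[g(∇_s l, s) + g(∇_{α♯} l, α♯)]`. -/
def theta (g : Lorentzian) (l s a : Vec) : Sc :=
  (1 / 2 : Sc) * (g.inner (g.nabla s l) s + g.inner (g.nabla a l) a)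

/-- The foliation admits an equipartition of null mean curvature w.r.t. `l`:
`θ = g(∇_s l, s)`. -/
def Equipartition (g : Lorentzian) (l s a : Vec) : Prop :=
  theta g l s a = g.inner (g.nabla s l) s

/-- `l` admits a uniform equipartition of null mean curvature:
`g(∇_s l, α♯) + g(∇_{α♯} l, s) = 0`. -/
def UniformEquipartition (g : Lorentzian) (l s a : Vec) : Prop :=
  g.inner (g.nabla s l) a + g.inner (g.nabla a l) s = 0

/-- `v` lies in the kernel of the 2-form `F`. -/
def InKernel (F : Form2) (v : Vec) : Prop := ∀ μ, (∑ ν, F μ ν * v ν) = 0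

/-- The kernel of `F` consists at each point exactly of the vectors tangent to the
leaves of the adapted chart (those with vanishing `x³`- and `x⁴`-components). -/
def KernelExact (F : Form2) : Prop :=
  ∀ (p : Pt) (v : Fin 4 → ℝ),
    (∀ μ, (∑ ν, F μ ν p * v ν) = 0) ↔ (v 2 = 0 ∧ v 3 = 0)

/-- The kernel of `F` is at each point exactly the span of `v` and `w`. -/
def KernelSpan (F : Form2) (v w : Vec) : Prop :=
  ∀ (p : Pt) (x : Fin 4 → ℝ),
    (∀ μ, (∑ ν, F μ ν p * x ν) = 0) ↔ ∃ c d : ℝ, ∀ μ, x μ = c * v μ p + d * w μ p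

/-- `u` is a function of `(x³,x⁴)` alone (constant along the leaves). -/
def LeafConstant (u : Sc) : Prop := pd 0 u = 0 ∧ pd 1 u = 0

/-- The 2-form `F = u dx³ ∧ dx⁴`. -/
def chartF (u : Sc) : Form2 := fun μ ν =>
  u * ((if μ = 2 ∧ ν = 3 then (1 : Sc) else 0) - if μ = 3 ∧ ν = 2 then (1 : Sc) else 0)

/-- The transition factor `κ = (α₃ l♭₄ − α₄ l♭₃)⁻¹`. -/
def kappa (g : Lorentzian) (a l : Vec) : Sc :=
  (g.flat a 2 * g.flat l 3 - g.flat a 3 * g.flat l 2)⁻¹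

/-- The 2-form `F = (u·κ) α ∧ l♭` (with `α = a♭`). -/
def frameF (g : Lorentzian) (a l : Vec) (u : Sc) : Form2 := fun μ ν =>
  u * kappa g a l * (g.flat a μ * g.flat l ν - g.flat a ν * g.flat l μ)

end FFE

/-- The 1-form `α = −(g³³)^{−1/2} dx³` (coordinate `x³` has index `2`). -/
def FFE.alphaM (g : FFE.Lorentzian) : FFE.Cov := fun μ => fun p =>
  if μ = 2 then -1 / Real.sqrt (g.ginv 2 2 p) else 0

namespace FFE

/-- Auxiliary: the scalar `λ = g³⁴/g³³`. -/
def lamF (g : Lorentzian) : Sc := fun q => g.ginv 2 3 q / g.ginv 2 2 q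

lemma smooth_diffAt {f : Sc} (hf : Smooth f) (p : Pt) : DifferentiableAt ℝ f p :=
  (hf.differentiable (by simp)).differentiableAt

lemma pd_mul' (i : Fin 4) (f h : Sc) (p : Pt) (hf : DifferentiableAt ℝ f p)
    (hh : DifferentiableAt ℝ h p) :
    pd i (fun q => f q * h q) p = pd i f p * h p + f p * pd i h p := by
  unfold pd
  rw [fderiv_fun_mul hf hh]
  simp
  ring

lemma hasFDerivAt_inv_comp (f : Sc) (p : Pt) (hf : DifferentiableAt ℝ f p) (h0 : f p ≠ 0) :
    HasFDerivAt (fun q => (f q)⁻¹) ((-(f p ^ 2)⁻¹) • fderiv ℝ f p) p :=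
  (hasDerivAt_inv h0).comp_hasFDerivAt p hf.hasFDerivAt

lemma diffAt_inv (f : Sc) (p : Pt) (hf : DifferentiableAt ℝ f p) (h0 : f p ≠ 0) :
    DifferentiableAt ℝ (fun q => (f q)⁻¹) p :=
  (hasFDerivAt_inv_comp f p hf h0).differentiableAt

lemma pd_inv' (i : Fin 4) (f : Sc) (p : Pt) (hf : DifferentiableAt ℝ f p) (h0 : f p ≠ 0) :
    pd i (fun q => (f q)⁻¹) p = -(pd i f p) / (f p) ^ 2 := by
  unfold pd
  rw [(hasFDerivAt_inv_comp f p hf h0).fderiv]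
  simp
  ring

lemma diffAt_div (f h : Sc) (p : Pt) (hf : DifferentiableAt ℝ f p)
    (hh : DifferentiableAt ℝ h p) (h0 : h p ≠ 0) :
    DifferentiableAt ℝ (fun q => f q / h q) p := by
  simp only [div_eq_mul_inv]
  exact hf.mul (diffAt_inv h p hh h0)

lemma pd_div' (i : Fin 4) (f h : Sc) (p : Pt) (hf : DifferentiableAt ℝ f p)
    (hh : DifferentiableAt ℝ h p) (h0 : h p ≠ 0) :
    pd i (fun q => f q / h q) p = (pd i f p * h p - f p * pd i h p) / (h p) ^ 2 := by
  have : (fun q => f q / h q) = fun q => f q * (h q)⁻¹ := by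
    funext q; rw [div_eq_mul_inv]
  rw [this, pd_mul' i f _ p hf (diffAt_inv h p hh h0), pd_inv' i h p hh h0]
  field_simp
  ring

lemma pd_zero' (i : Fin 4) (p : Pt) : pd i (0 : Sc) p = 0 := by
  unfold pd
  simp [show (0 : Sc) = fun _ => (0:ℝ) from rfl]

lemma pd_neg' (i : Fin 4) (f : Sc) (p : Pt) :
    pd i (fun q => -(f q)) p = -(pd i f p) := by
  unfold pd
  rw [fderiv_fun_neg]
  simp

lemma Nvec_eq (g : Lorentzian) (hdeg : g.NullAdapted) (hg33 : ∀ p, 0 < g.ginv 2 2 p)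
    (r : Fin 4) (q : Pt) : Nvec g r q = lamF g q * Mvec g r q := by
  have hA : g.ginv 2 2 q ≠ 0 := (hg33 q).ne'
  show g.ginv r 2 q * g.ginv 3 3 q - g.ginv 2 3 q * g.ginv r 3 q
      = g.ginv 2 3 q / g.ginv 2 2 q *
        (g.ginv r 2 q * g.ginv 2 3 q - g.ginv 2 2 q * g.ginv r 3 q)
  field_simp
  linear_combination (g.ginv r 2 q) * hdeg q

lemma smooth_Mvec (g : Lorentzian) (r : Fin 4) : Smooth (Mvec g r) :=
  (((g.smooth_ginv r 2).mul (g.smooth_ginv 2 3)).sub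
    ((g.smooth_ginv 2 2).mul (g.smooth_ginv r 3)))

lemma diffAt_lamF (g : Lorentzian) (hg33 : ∀ p, 0 < g.ginv 2 2 p) (q : Pt) :
    DifferentiableAt ℝ (lamF g) q :=
  diffAt_div _ _ q (smooth_diffAt (g.smooth_ginv 2 3) q)
    (smooth_diffAt (g.smooth_ginv 2 2) q) (hg33 q).ne'

lemma divN_eq (g : Lorentzian) (hdeg : g.NullAdapted) (hg33 : ∀ p, 0 < g.ginv 2 2 p)
    (hdivM : g.div (Mvec g) = 0) (p : Pt) :
    g.div (Nvec g) p = act (Mvec g) (lamF g) p := by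
  have hvol : g.vol p ≠ 0 := (g.vol_pos p).ne'
  have hsum : (∑ μ, pd μ (fun q => g.vol q * Mvec g μ q) p) = 0 := by
    have h := congrFun hdivM p
    simp only [Lorentzian.div, Pi.zero_apply] at h
    rcases mul_eq_zero.mp h with h' | h'
    · exact absurd h' (inv_ne_zero hvol)
    · exact h'
  have hre : ∀ μ : Fin 4, pd μ (fun q => g.vol q * Nvec g μ q) p
      = pd μ (lamF g) p * (g.vol p * Mvec g μ p)
        + lamF g p * pd μ (fun q => g.vol q * Mvec g μ q) p := by
    intro μ
    have hfe : (fun q => g.vol q * Nvec g μ q)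
        = fun q => lamF g q * ((fun q => g.vol q * Mvec g μ q) q) := by
      funext q
      rw [Nvec_eq g hdeg hg33 μ q]; ring
    rw [hfe]
    exact pd_mul' μ _ _ p (diffAt_lamF g hg33 p)
      ((smooth_diffAt g.smooth_vol p).mul (smooth_diffAt (smooth_Mvec g μ) p))
  show (g.vol p)⁻¹ * ∑ μ, pd μ (fun q => g.vol q * Nvec g μ q) p = _
  rw [Finset.sum_congr rfl fun μ _ => hre μ, Finset.sum_add_distrib,
    ← Finset.mul_sum, hsum, mul_zero, add_zero]
  unfold act
  simp only [Finset.sum_apply, Pi.mul_apply, Fin.sum_univ_four]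
  field_simp

lemma flatM_eq (g : Lorentzian) :
    g.flat (Mvec g) = fun ν =>
      if ν = 2 then g.ginv 2 3 else if ν = 3 then (fun q => -(g.ginv 2 2 q)) else 0 := by
  funext ν p
  have h2 : ∀ j : Fin 4, (∑ ρ, g.gdown ν ρ p * g.ginv ρ j p) = if j = ν then 1 else 0 := by
    intro j
    rw [← g.inv_gdown j ν p]
    exact Finset.sum_congr rfl fun ρ _ => by
      rw [g.symm_gdown ν ρ, g.symm_ginv ρ j, mul_comm]
  have h22 := h2 2
  have h23 := h2 3
  simp only [Fin.sum_univ_four] at h22 h23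
  show (∑ μ, g.gdown ν μ * Mvec g μ) p = _
  simp only [Finset.sum_apply, Pi.mul_apply, Fin.sum_univ_four, Mvec, Pi.sub_apply]
  fin_cases ν <;> simp_all <;> linear_combination (g.ginv 2 3 p) * h22 - (g.ginv 2 2 p) * h23

lemma sharp_alpha_eq (g : Lorentzian) (ν : Fin 4) (p : Pt) :
    g.sharp (alphaM g) ν p = g.ginv ν 2 p * (-1 / Real.sqrt (g.ginv 2 2 p)) := by
  show (∑ μ, g.ginv ν μ * alphaM g μ) p = _
  simp [Finset.sum_apply, Pi.mul_apply, Fin.sum_univ_four, alphaM]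

lemma dOne_eq (g : Lorentzian) (hdeg : g.NullAdapted) (hg33 : ∀ p, 0 < g.ginv 2 2 p)
    (p : Pt) :
    dOne (g.flat (Mvec g)) (Mvec g) (g.sharp (alphaM g)) p
      = -(g.ginv 2 2 p * Real.sqrt (g.ginv 2 2 p)) * act (Mvec g) (lamF g) p := by
  have hApos := hg33 p
  have hAne : g.ginv 2 2 p ≠ 0 := hApos.ne'
  have hsqpos : 0 < Real.sqrt (g.ginv 2 2 p) := Real.sqrt_pos.mpr hApos
  have hsq : Real.sqrt (g.ginv 2 2 p) ^ 2 = g.ginv 2 2 p := Real.sq_sqrt hApos.le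
  have hM2 : Mvec g 2 p = 0 := by
    show g.ginv 2 2 p * g.ginv 2 3 p - g.ginv 2 2 p * g.ginv 2 3 p = 0
    ring
  have hM3 : Mvec g 3 p = 0 := by
    show g.ginv 3 2 p * g.ginv 2 3 p - g.ginv 2 2 p * g.ginv 3 3 p = 0
    have h32 : g.ginv 3 2 p = g.ginv 2 3 p := congrFun (g.symm_ginv 3 2) p
    rw [h32]
    linear_combination (-1 : ℝ) * hdeg p
  have h32 : g.ginv 3 2 p = g.ginv 2 3 p := congrFun (g.symm_ginv 3 2) p
  have hpdlam : ∀ i : Fin 4, pd i (lamF g) p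
      = (pd i (g.ginv 2 3) p * g.ginv 2 2 p - g.ginv 2 3 p * pd i (g.ginv 2 2) p)
        / (g.ginv 2 2 p) ^ 2 :=
    fun i => pd_div' i _ _ p (smooth_diffAt (g.smooth_ginv 2 3) p)
      (smooth_diffAt (g.smooth_ginv 2 2) p) hAne
  have hω : ∀ ν : Fin 4, g.flat (Mvec g) ν
      = if ν = 2 then g.ginv 2 3 else if ν = 3 then (fun q => -(g.ginv 2 2 q)) else 0 :=
    fun ν => congrFun (flatM_eq g) ν
  have hpdω : ∀ i ν : Fin 4, pd i (g.flat (Mvec g) ν) p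
      = (if ν = 2 then pd i (g.ginv 2 3) p
          else if ν = 3 then -(pd i (g.ginv 2 2) p) else 0) := by
    intro i ν
    rw [hω ν]
    fin_cases ν <;> simp [pd_zero', pd_neg']
  show (∑ μ, ∑ ν, (pd μ (g.flat (Mvec g) ν) - pd ν (g.flat (Mvec g) μ))
      * Mvec g μ * g.sharp (alphaM g) ν) p = _
  simp only [Finset.sum_apply, Pi.add_apply, Pi.mul_apply, Pi.sub_apply, Fin.sum_univ_four]
  rw [hM2, hM3]
  simp only [hpdω, sharp_alpha_eq, h32, Fin.reduceEq, reduceIte, mul_zero, zero_mul, sub_zero, zero_sub, add_zero, zero_add]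
  unfold act
  simp only [Finset.sum_apply, Pi.mul_apply, Fin.sum_univ_four]
  rw [hM2, hM3]
  simp only [hpdlam, zero_mul, add_zero]
  rw [show g.ginv 2 2 p = Real.sqrt (g.ginv 2 2 p) ^ 2 from hsq.symm]
  field_simp
  rw [Real.sqrt_sq hsqpos.le]
  ring

end FFE

/-- In a null foliation adapted chart, with `l = M`
(`M^r = g^{r3}g^{34} − g^{33}g^{r4}`, divergence free), `α = −(g³³)^{−1/2}dx³`,
and `N^r = g^{r3}g^{44} − g^{34}g^{r4}`:  `∇_μ N^μ = 0` if and only if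
`dM♭(M, α♯) = 0`. -/
theorem FFE.divergence_N_iff (g : Lorentzian) (hdeg : g.NullAdapted)
    (hg33 : ∀ p, 0 < g.ginv 2 2 p)
    (s n : Vec) (hframe : Frame g s (Mvec g) (g.sharp (alphaM g)) n)
    (hs2 : s 2 = 0) (hs3 : s 3 = 0)
    (hdivM : g.div (Mvec g) = 0) :
    g.div (Nvec g) = 0 ↔
      dOne (g.flat (Mvec g)) (Mvec g) (g.sharp (alphaM g)) = 0 := by
  constructor
  · intro h
    funext p
    have h1 : act (Mvec g) (lamF g) p = 0 := by
      have h0 := congrFun h p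
      rw [divN_eq g hdeg hg33 hdivM p] at h0
      simpa using h0
    simp only [Pi.zero_apply]
    rw [dOne_eq g hdeg hg33 p, h1, mul_zero]
  · intro h
    funext p
    have h2 := congrFun h p
    rw [dOne_eq g hdeg hg33 p] at h2
    simp only [Pi.zero_apply] at h2 ⊢
    have hne : -(g.ginv 2 2 p * Real.sqrt (g.ginv 2 2 p)) ≠ 0 :=
      neg_ne_zero.mpr (mul_pos (hg33 p) (Real.sqrt_pos.mpr (hg33 p))).ne'
    have h1 : act (Mvec g) (lamF g) p = 0 := by
      rcases mul_eq_zero.mp h2 with h' | h'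
      · exact absurd h' hne
      · exact h'
    rw [divN_eq g hdeg hg33 hdivM p, h1]
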